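/- Let A, A′ be alcoves with centers v, v′ in the region B (all simple-root coordinates in (0,1)) such that A′ = s_{α,r}(A) with r < ⟨α, v′⟩ < r+1 (a covering in the weak order). Then I(A) = s_{α*, ⟨α,ρ⟩ − r}(I(A′)) and ⟨α,ρ⟩ − r < ⟨α*, I(v)⟩ < ⟨α,ρ⟩ − r + 1, where α* = −w_0(α) and I = t_ρ∘w_0. -/
import Mathlib


/- Type `A_k` is modelled in the ambient space `ℝ^{k+1}`: the roots are
`e_i - e_j` (`i ≠ j`), the simple roots are `α_i = e_{i-1} - e_i`, the pairing
is the standard inner product, `w₀` reverses the coordinates, and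
`ρ = (k, k-1, …, 0)` satisfies `⟨ρ, e_i - e_j⟩ = j - i`. -/

/-- The standard pairing on `ℝ^n`. -/
def inn {n : ℕ} (v w : Fin n → ℝ) : ℝ := ∑ l, v l * w l

/-- The root `e_i - e_j` of type `A_k` (for `i ≠ j`). -/
def aroot {n : ℕ} (i j : Fin n) : Fin n → ℝ :=
  fun l => (if l = i then 1 else 0) - (if l = j then 1 else 0)

/-- The affine reflection `s_{α,r}` in the hyperplane `H_{α,r} = {v : ⟨v,α⟩ = r}`
(for a root `α` of type `A`, so `⟨α,α⟩ = 2`). -/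
def arefl {n : ℕ} (α : Fin n → ℝ) (r : ℝ) (v : Fin n → ℝ) : Fin n → ℝ :=
  v - (inn v α - r) • α

/-- The longest element `w₀` of `S_{k+1}` acting on `ℝ^{k+1}`: coordinate reversal. -/
def w0amb {n : ℕ} (v : Fin n → ℝ) : Fin n → ℝ := fun l => v (Fin.rev l)

/-- A representative of `ρ = Λ_1 + ⋯ + Λ_k`: `ρ = (k, k-1, …, 0)`. -/
def rhoamb (k : ℕ) : Fin (k + 1) → ℝ := fun l => (k : ℝ) - l.val

/-- The involution `I = t_ρ ∘ w₀`. -/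
def Iamb (k : ℕ) (v : Fin (k + 1) → ℝ) : Fin (k + 1) → ℝ := w0amb v + rhoamb k

/-- The simple-root coordinates `⟨v, α_l⟩`, `α_l = e_{l-1} - e_l`. -/
def simpleCoord (k : ℕ) (v : Fin (k + 1) → ℝ) (l : Fin k) : ℝ :=
  inn v (aroot l.castSucc l.succ)

/-- let `A, A'` be alcoves with centers `v, v'` in the region `B`
(all simple-root coordinates in `(0,1)`) such that `A' = s_{α,r}(A)` with
`r < ⟨α, v'⟩ < r+1`, for a root `α = e_i - e_j`.  Then
`I(A) = s_{α*, ⟨α,ρ⟩-r}(I(A'))` and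
`⟨α,ρ⟩ - r < ⟨α*, I(v)⟩ < ⟨α,ρ⟩ - r + 1`, where `α* = -w₀(α) = e_{rev j} - e_{rev i}`. -/

lemma inn_aroot {n : ℕ} (v : Fin n → ℝ) (i j : Fin n) : inn v (aroot i j) = v i - v j := by
  simp [inn, aroot, mul_sub, Finset.sum_sub_distrib, mul_ite, mul_one, mul_zero]

lemma arefl_apply {n : ℕ} (α : Fin n → ℝ) (r : ℝ) (v : Fin n → ℝ) (l : Fin n) :
    arefl α r v l = v l - (inn v α - r) * α l := rfl

lemma rho_rev (k : ℕ) (j : Fin (k + 1)) : rhoamb k (Fin.rev j) = (j.val : ℝ) := by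
  have hj : j.val ≤ k := Nat.lt_succ_iff.mp j.isLt
  simp only [rhoamb, Fin.val_rev]
  rw [show k + 1 - (j.val + 1) = k - j.val by omega, Nat.cast_sub hj]
  ring

lemma rev_eq_iff' {n : ℕ} (l i : Fin n) : Fin.rev l = i ↔ l = Fin.rev i := by
  constructor
  · rintro rfl; exact (Fin.rev_rev l).symm
  · rintro rfl; exact Fin.rev_rev i

lemma aroot_rev {k : ℕ} (i j l : Fin (k + 1)) :
    aroot i j (Fin.rev l) = - aroot (Fin.rev j) (Fin.rev i) l := by
  simp only [aroot, rev_eq_iff']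
  ring

theorem involution_reverses_covering (k : ℕ) (i j : Fin (k + 1)) (hij : i ≠ j)
    (r : ℝ) (v v' : Fin (k + 1) → ℝ)
    (hv : ∀ l : Fin k, 0 < simpleCoord k v l ∧ simpleCoord k v l < 1)
    (hv' : ∀ l : Fin k, 0 < simpleCoord k v' l ∧ simpleCoord k v' l < 1)
    (hrefl : v' = arefl (aroot i j) r v)
    (h₁ : r < inn v' (aroot i j)) (h₂ : inn v' (aroot i j) < r + 1) :
    Iamb k v =
      arefl (aroot (Fin.rev j) (Fin.rev i)) (inn (rhoamb k) (aroot i j) - r)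
        (Iamb k v')
    ∧ inn (rhoamb k) (aroot i j) - r < inn (Iamb k v) (aroot (Fin.rev j) (Fin.rev i))
    ∧ inn (Iamb k v) (aroot (Fin.rev j) (Fin.rev i)) < inn (rhoamb k) (aroot i j) - r + 1 := by

  have hji : j ≠ i := hij.symm
  have hvi' : v' i = v i - ((v i - v j) - r) := by
    rw [hrefl, arefl_apply, inn_aroot]
    simp [aroot, hij]
  have hvj' : v' j = v j + ((v i - v j) - r) := by
    rw [hrefl, arefl_apply, inn_aroot]
    simp [aroot, hji]
    ring
  have ha' : inn v' (aroot i j) = 2 * r - (v i - v j) := by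
    rw [inn_aroot, hvi', hvj']; ring
  have hc : inn (rhoamb k) (aroot i j) = (j.val : ℝ) - i.val := by
    rw [inn_aroot]; simp [rhoamb]
  have hIv : inn (Iamb k v) (aroot (Fin.rev j) (Fin.rev i)) =
      (v j - v i) + ((j.val : ℝ) - i.val) := by
    rw [inn_aroot]
    simp only [Iamb, Pi.add_apply, w0amb, Fin.rev_rev, rho_rev]
    ring
  have hIv' : inn (Iamb k v') (aroot (Fin.rev j) (Fin.rev i)) =
      (v' j - v' i) + ((j.val : ℝ) - i.val) := by
    rw [inn_aroot]
    simp only [Iamb, Pi.add_apply, w0amb, Fin.rev_rev, rho_rev]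
    ring
  rw [ha'] at h₁ h₂
  refine ⟨?_, ?_, ?_⟩
  · funext l
    rw [arefl_apply, hIv', hvi', hvj', hc]
    have h5 : Iamb k v' l = v (Fin.rev l) - ((v i - v j) - r) * aroot i j (Fin.rev l)
        + rhoamb k l := by
      simp [Iamb, w0amb, hrefl, arefl_apply, inn_aroot]
    rw [h5, aroot_rev]
    show v (Fin.rev l) + rhoamb k l = _
    ring
  · rw [hIv, hc]; linarith
  · rw [hIv, hc]; linarith
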